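/- Let G be an abelian group with |G| > 1 and let I be an infinite index set. Then the direct sum ⊕_{i ∈ I} G (the group of finitely supported functions from I to G under pointwise addition) admits an SSGP topology; that is, there is a Hausdorff group topology 𝒯 on ⊕_{i ∈ I} G such that it has the small subgroup generating property (SSGP). -/

import Mathlib

universe u v

/-- The small subgroup generating property, additive version: for every
neighborhood `U` of `0` there is a family `𝓗` of subgroups of `G`, each
contained in `U`, such that the subgroup generated by `⋃ 𝓗` is dense in `G`. -/
def AddHasSSGP (G : Type u) [AddGroup G] [TopologicalSpace G] : Prop :=
  ∀ U ∈ nhds (0 : G), ∃ 𝓗 : Set (AddSubgroup G),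
    (∀ H ∈ 𝓗, (H : Set G) ⊆ U) ∧
    Dense ((AddSubgroup.closure (⋃ H ∈ 𝓗, (H : Set G))) : Set G)

set_option linter.unusedSectionVars false
set_option maxHeartbeats 1000000

open Set


namespace SSGPAux

abbrev Idx (κ : Type*) := Lex (ℚ × Lex (κ × ℚ))

variable {κ : Type*} [LinearOrder κ]

def qc (t : Idx κ) : ℚ := (ofLex t).1
def kc (t : Idx κ) : κ := (ofLex (ofLex t).2).1
def pc (t : Idx κ) : ℚ := (ofLex (ofLex t).2).2
def mk3 (q : ℚ) (i : κ) (p : ℚ) : Idx κ := toLex (q, toLex (i, p))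

@[simp] lemma qc_mk3 (q : ℚ) (i : κ) (p : ℚ) : qc (mk3 q i p) = q := rfl
@[simp] lemma kc_mk3 (q : ℚ) (i : κ) (p : ℚ) : kc (mk3 q i p) = i := rfl
@[simp] lemma pc_mk3 (q : ℚ) (i : κ) (p : ℚ) : pc (mk3 q i p) = p := rfl

lemma mk3_eta (t : Idx κ) : mk3 (qc t) (kc t) (pc t) = t := rfl

lemma lt_iff3 {s t : Idx κ} :
    s < t ↔ qc s < qc t ∨ (qc s = qc t ∧ (kc s < kc t ∨ (kc s = kc t ∧ pc s < pc t))) := by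
  rw [← mk3_eta s, ← mk3_eta t]
  constructor
  · intro h
    rcases Prod.Lex.lt_iff.1 h with h1 | ⟨h1, h2⟩
    · exact Or.inl h1
    · rcases Prod.Lex.lt_iff.1 h2 with h3 | ⟨h3, h4⟩
      · exact Or.inr ⟨h1, Or.inl h3⟩
      · exact Or.inr ⟨h1, Or.inr ⟨h3, h4⟩⟩
  · intro h
    apply Prod.Lex.lt_iff.2
    rcases h with h1 | ⟨h1, h2 | ⟨h2, h3⟩⟩
    · exact Or.inl h1
    · exact Or.inr ⟨h1, Prod.Lex.lt_iff.2 (Or.inl h2)⟩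
    · exact Or.inr ⟨h1, Prod.Lex.lt_iff.2 (Or.inr ⟨h2, h3⟩)⟩

lemma qc_mono {s t : Idx κ} (h : s ≤ t) : qc s ≤ qc t := by
  rcases eq_or_lt_of_le h with rfl | h
  · exact le_rfl
  · rcases lt_iff3.1 h with h1 | ⟨h1, _⟩
    · exact h1.le
    · exact h1.le

lemma kc_mono_fiber {s t : Idx κ} (h : s ≤ t) (hq : qc s = qc t) : kc s ≤ kc t := by
  rcases eq_or_lt_of_le h with rfl | h
  · exact le_rfl
  · rcases lt_iff3.1 h with h1 | ⟨_, h2 | ⟨h2, _⟩⟩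
    · exact absurd hq (ne_of_lt h1)
    · exact h2.le
    · exact h2.le

lemma pc_mono_fiber {s t : Idx κ} (h : s ≤ t) (hq : qc s = qc t) (hk : kc s = kc t) :
    pc s ≤ pc t := by
  rcases eq_or_lt_of_le h with rfl | h
  · exact le_rfl
  · rcases lt_iff3.1 h with h1 | ⟨_, h2 | ⟨_, h3⟩⟩
    · exact absurd hq (ne_of_lt h1)
    · exact absurd hk (ne_of_lt h2)
    · exact h3.le

lemma lt_of_qc_lt {s t : Idx κ} (h : qc s < qc t) : s < t := lt_iff3.2 (Or.inl h)

lemma pc_lt_of_lt_fiber {s t : Idx κ} (h : s < t) (hq : qc s = qc t) (hk : kc s = kc t) :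
    pc s < pc t := by
  rcases lt_iff3.1 h with h1 | ⟨_, h2 | ⟨_, h3⟩⟩
  · exact absurd hq (ne_of_lt h1)
  · exact absurd hk (ne_of_lt h2)
  · exact h3

def qlq (q : ℚ) : ℚ := max q 0 / (max q 0 + 1)

lemma qlq_nonneg (q : ℚ) : 0 ≤ qlq q := by
  have h0 : (0:ℚ) ≤ max q 0 := le_max_right _ _
  exact div_nonneg h0 (by linarith)

lemma qlq_lt_one (q : ℚ) : qlq q < 1 := by
  have h0 : (0:ℚ) ≤ max q 0 := le_max_right _ _
  rw [qlq, div_lt_one (by linarith)]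
  linarith

lemma qlq_mono : Monotone qlq := by
  intro a b hab
  have ha : (0:ℚ) ≤ max a 0 := le_max_right _ _
  have hab' : max a 0 ≤ max b 0 := max_le_max hab le_rfl
  rw [qlq, qlq, div_le_div_iff₀ (by linarith) (by linarith)]
  nlinarith

lemma qlq_surj {r : ℚ} (h0 : 0 ≤ r) (h1 : r < 1) : qlq (r / (1 - r)) = r := by
  have h2 : (0:ℚ) < 1 - r := by linarith
  have h3 : 0 ≤ r / (1 - r) := div_nonneg h0 h2.le
  rw [qlq, max_eq_left h3]
  have h4 : r / (1 - r) + 1 = 1 / (1 - r) := by field_simp; ring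
  rw [h4, div_div_div_eq]
  field_simp

lemma qlq_reflect_lt {a b : ℚ} (h : qlq a < qlq b) : a < b := by
  by_contra hc
  exact absurd (qlq_mono (not_lt.1 hc)) (not_le.2 h)

/-! ### Ramp functions -/

def rampA (f t : Idx κ) : ℝ :=
  if f ≤ t then 1
  else if qc t = qc f ∧ kc t = kc f ∧ pc f - 1 < pc t then ((pc t - pc f + 1 : ℚ) : ℝ)
  else 0

def rampB (f t : Idx κ) : ℝ :=
  if t ≤ f then 0
  else if qc t = qc f ∧ kc t = kc f ∧ pc t < pc f + 1 then ((pc t - pc f : ℚ) : ℝ)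
  else 1

lemma rampA_nonneg (f t : Idx κ) : 0 ≤ rampA f t := by
  rw [rampA]
  split
  · norm_num
  split
  next h =>
    have := h.2.2
    push_cast
    linarith [(by exact_mod_cast this : (pc f : ℝ) - 1 < (pc t : ℝ))]
  · norm_num

lemma rampA_le_one (f t : Idx κ) : rampA f t ≤ 1 := by
  rw [rampA]
  split
  · norm_num
  next hft =>
  split
  next h =>
    have htf : t < f := not_le.1 hft
    have hp : pc t < pc f := pc_lt_of_lt_fiber htf h.1 h.2.1
    push_cast
    linarith [(by exact_mod_cast hp : (pc t : ℝ) < (pc f : ℝ))]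
  · norm_num

lemma rampA_of_le {f t : Idx κ} (h : f ≤ t) : rampA f t = 1 := by rw [rampA, if_pos h]

lemma rampA_mono (f : Idx κ) : Monotone (rampA f) := by
  intro s t hst
  by_cases h1 : f ≤ t
  · rw [rampA_of_le h1]; exact rampA_le_one f s
  · have htf : t < f := not_le.1 h1
    have hsf : s < f := lt_of_le_of_lt hst htf
    by_cases h2 : qc s = qc f ∧ kc s = kc f ∧ pc f - 1 < pc s
    · have hqst : qc s = qc t := le_antisymm (qc_mono hst) (by rw [h2.1]; exact qc_mono htf.le)
      have hqt : qc t = qc f := hqst.symm.trans h2.1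
      have hkst : kc s ≤ kc t := kc_mono_fiber hst hqst
      have hkt : kc t = kc f := le_antisymm (kc_mono_fiber htf.le hqt) (h2.2.1 ▸ hkst)
      have hkst' : kc s = kc t := hkt ▸ h2.2.1
      have hpst : pc s ≤ pc t := pc_mono_fiber hst hqst hkst'
      simp only [rampA]
      rw [if_neg h1,
        if_pos (show qc t = qc f ∧ kc t = kc f ∧ pc f - 1 < pc t from
          ⟨hqt, hkt, lt_of_lt_of_le h2.2.2 hpst⟩),
        if_neg (not_le.2 hsf), if_pos h2]
      push_cast
      have : (pc s : ℝ) ≤ pc t := by exact_mod_cast hpst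
      linarith
    · have hz : rampA f s = 0 := by
        rw [rampA, if_neg (not_le.2 hsf), if_neg h2]
      rw [hz]
      exact rampA_nonneg f t

lemma rampB_nonneg (f t : Idx κ) : 0 ≤ rampB f t := by
  rw [rampB]
  split
  · norm_num
  next hft =>
  split
  next h =>
    have hf : f < t := not_le.1 hft
    have hp : pc f < pc t := pc_lt_of_lt_fiber hf h.1.symm h.2.1.symm
    push_cast
    linarith [(by exact_mod_cast hp : (pc f : ℝ) < (pc t : ℝ))]
  · norm_num

lemma rampB_le_one (f t : Idx κ) : rampB f t ≤ 1 := by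
  rw [rampB]
  split
  · norm_num
  split
  next h =>
    have := h.2.2
    push_cast
    linarith [(by exact_mod_cast this : (pc t : ℝ) < (pc f : ℝ) + 1)]
  · norm_num

lemma rampB_of_le {f t : Idx κ} (h : t ≤ f) : rampB f t = 0 := by rw [rampB, if_pos h]

lemma rampB_pos {f t : Idx κ} (h : f < t) : 0 < rampB f t := by
  rw [rampB, if_neg (not_le.2 h)]
  split
  next h2 =>
    have hp : pc f < pc t := pc_lt_of_lt_fiber h h2.1.symm h2.2.1.symm
    push_cast
    linarith [(by exact_mod_cast hp : (pc f : ℝ) < (pc t : ℝ))]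
  · norm_num

lemma rampB_mono (f : Idx κ) : Monotone (rampB f) := by
  intro s t hst
  by_cases h1 : s ≤ f
  · have hz : rampB f s = 0 := by rw [rampB, if_pos h1]
    rw [hz]; exact rampB_nonneg f t
  · have hfs : f < s := not_le.1 h1
    have hft : f < t := lt_of_lt_of_le hfs hst
    by_cases h2 : qc t = qc f ∧ kc t = kc f ∧ pc t < pc f + 1
    · have hqst : qc s = qc t := le_antisymm (qc_mono hst) (by rw [h2.1]; exact qc_mono hfs.le)
      have hqs : qc s = qc f := hqst.trans h2.1
      have hkst : kc s ≤ kc t := kc_mono_fiber hst hqst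
      have hks : kc s = kc f := le_antisymm (by rw [← h2.2.1]; exact hkst) (kc_mono_fiber hfs.le hqs.symm)
      have hkst' : kc s = kc t := by rw [hks, h2.2.1]
      have hpst : pc s ≤ pc t := pc_mono_fiber hst hqst hkst'
      simp only [rampB]
      rw [if_neg (not_le.2 hft), if_pos h2, if_neg h1,
        if_pos (show qc s = qc f ∧ kc s = kc f ∧ pc s < pc f + 1 from
          ⟨hqs, hks, lt_of_le_of_lt hpst h2.2.2⟩)]
      push_cast
      have : (pc s : ℝ) ≤ pc t := by exact_mod_cast hpst
      linarith
    · have ho : rampB f t = 1 := by rw [rampB, if_neg (not_le.2 hft), if_neg h2]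
      rw [ho]
      exact rampB_le_one f s

/-! ### The separating function -/

noncomputable def cF (f t : Idx κ) : ℝ := (((qlq (qc t) : ℚ) : ℝ) + rampA f t + rampB f t) / 3

lemma cF_mono (f : Idx κ) : Monotone (cF f) := by
  intro s t hst
  have h1 : (qlq (qc s) : ℝ) ≤ (qlq (qc t) : ℝ) := by
    exact_mod_cast qlq_mono (qc_mono hst)
  have h2 := rampA_mono f hst
  have h3 := rampB_mono f hst
  rw [cF, cF]
  linarith

lemma cF_nonneg (f t : Idx κ) : 0 ≤ cF f t := by
  have h1 : (0:ℝ) ≤ (qlq (qc t) : ℝ) := by exact_mod_cast qlq_nonneg _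
  have h2 := rampA_nonneg f t
  have h3 := rampB_nonneg f t
  rw [cF]; linarith

lemma cF_lt_one (f t : Idx κ) : cF f t < 1 := by
  have h1 : ((qlq (qc t) : ℚ) : ℝ) < 1 := by exact_mod_cast qlq_lt_one _
  have h2 := rampA_le_one f t
  have h3 := rampB_le_one f t
  rw [cF]; linarith

lemma cF_self (f : Idx κ) : cF f f = (((qlq (qc f) : ℚ) : ℝ) + 1) / 3 := by
  rw [cF, rampA_of_le le_rfl, rampB_of_le le_rfl]
  ring

lemma cF_sep {f t : Idx κ} (h : f < t) : cF f f < cF f t := by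
  have h1 : (qlq (qc f) : ℝ) ≤ (qlq (qc t) : ℝ) := by
    exact_mod_cast qlq_mono (qc_mono h.le)
  have h2 := rampB_pos h
  rw [cF_self, cF, rampA_of_le h.le]
  linarith

lemma exists_rat_btwn_avoid (s : Finset ℝ) : ∀ {a b : ℝ}, a < b →
    ∃ r : ℚ, a < (r:ℝ) ∧ (r:ℝ) < b ∧ (r:ℝ) ∉ s := by
  classical
  induction s using Finset.induction_on with
  | empty =>
      intro a b h
      obtain ⟨r, h1, h2⟩ := exists_rat_btwn h
      exact ⟨r, h1, h2, by simp⟩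
  | @insert x s hx ih =>
      intro a b h
      obtain ⟨r, h1, h2, h3⟩ := ih h
      by_cases hr : (r:ℝ) = x
      · obtain ⟨r', h1', h2', h3'⟩ := ih (show a < (r:ℝ) from h1)
        refine ⟨r', h1', lt_trans h2' h2, ?_⟩
        simp only [Finset.mem_insert, not_or]
        exact ⟨by rw [← hr]; exact ne_of_lt h2', h3'⟩
      · exact ⟨r, h1, h2, by simp only [Finset.mem_insert, not_or]; exact ⟨hr, h3⟩⟩

lemma cF_dense (f : Idx κ) {a b : ℝ} (ha : 0 ≤ a) (hab : a < b) (hb : b ≤ 1) :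
    ∃ t : Idx κ, a < cF f t ∧ cF f t < b := by
  set Q : ℚ := qlq (qc f) with hQdef
  have hQ0 : 0 ≤ Q := qlq_nonneg _
  have hQ1 : Q < 1 := qlq_lt_one _
  obtain ⟨r, hr1, hr2, hr3⟩ :=
    exists_rat_btwn_avoid {((Q:ℝ))/3, ((Q:ℝ)+1)/3, ((Q:ℝ)+2)/3} hab
  simp only [Finset.mem_insert, Finset.mem_singleton, not_or] at hr3
  obtain ⟨hne1, hne2, hne3⟩ := hr3
  have hr0 : (0:ℚ) ≤ r := by exact_mod_cast le_trans ha hr1.le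
  have hrlt1 : (r:ℚ) < 1 := by exact_mod_cast lt_of_lt_of_le hr2 hb
  -- helper: it suffices to produce t with cF f t = r
  have key : ∀ t : Idx κ, cF f t = (r:ℝ) → ∃ t : Idx κ, a < cF f t ∧ cF f t < b := by
    intro t ht
    exact ⟨t, by rw [ht]; exact hr1, by rw [ht]; exact hr2⟩
  rcases lt_trichotomy r (Q/3) with hc1 | hc1 | hc1
  · -- Case 1 : r < Q/3
    set r' : ℚ := 3 * r with hr'def
    have h1 : r' < Q := by rw [hr'def]; linarith
    have h2 : 0 ≤ r' := by rw [hr'def]; linarith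
    set q' : ℚ := r' / (1 - r') with hq'def
    have h3 : qlq q' = r' := qlq_surj h2 (lt_trans h1 hQ1)
    have h4 : q' < qc f := qlq_reflect_lt (by rw [h3, ← hQdef]; exact h1)
    set t : Idx κ := mk3 q' (kc f) 0 with htdef
    have htf : t < f := lt_of_qc_lt (by simpa [htdef] using h4)
    apply key t
    have hA : rampA f t = 0 := by
      rw [rampA, if_neg (not_le.2 htf), if_neg]
      intro hcon
      exact absurd hcon.1 (by simpa [htdef] using ne_of_lt h4)
    have hB : rampB f t = 0 := rampB_of_le htf.le
    rw [cF, hA, hB]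
    have : qc t = q' := by simp [htdef]
    rw [this, h3]
    push_cast [hr'def]
    ring
  · exact absurd (by rw [hc1]; push_cast; ring) hne1
  · rcases lt_trichotomy r ((Q+1)/3) with hc2 | hc2 | hc2
    · -- Case 2 : Q/3 < r < (Q+1)/3
      set v : ℚ := 3 * r - Q with hvdef
      have hv0 : 0 < v := by rw [hvdef]; linarith
      have hv1 : v < 1 := by rw [hvdef]; linarith
      set t : Idx κ := mk3 (qc f) (kc f) (pc f - 1 + v) with htdef
      have htf : t < f := by
        apply lt_iff3.2
        right
        refine ⟨by simp [htdef], Or.inr ⟨by simp [htdef], ?_⟩⟩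
        simp only [htdef, pc_mk3]
        linarith
      apply key t
      have hA : rampA f t = ((v : ℚ) : ℝ) := by
        rw [rampA, if_neg (not_le.2 htf), if_pos]
        · simp only [htdef, pc_mk3]; push_cast; ring
        · refine ⟨by simp [htdef], by simp [htdef], ?_⟩
          simp only [htdef, pc_mk3]
          linarith
      have hB : rampB f t = 0 := rampB_of_le htf.le
      rw [cF, hA, hB]
      have hq : qc t = qc f := by simp [htdef]
      rw [hq, ← hQdef]
      push_cast [hvdef]
      ring
    · exact absurd (by rw [hc2]; push_cast; ring) hne2
    · rcases lt_trichotomy r ((Q+2)/3) with hc3 | hc3 | hc3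
      · -- Case 3 : (Q+1)/3 < r < (Q+2)/3
        set v : ℚ := 3 * r - Q - 1 with hvdef
        have hv0 : 0 < v := by rw [hvdef]; linarith
        have hv1 : v < 1 := by rw [hvdef]; linarith
        set t : Idx κ := mk3 (qc f) (kc f) (pc f + v) with htdef
        have hft : f < t := by
          apply lt_iff3.2
          right
          refine ⟨by simp [htdef], Or.inr ⟨by simp [htdef], ?_⟩⟩
          simp only [htdef, pc_mk3]
          linarith
        apply key t
        have hA : rampA f t = 1 := rampA_of_le hft.le
        have hB : rampB f t = ((v : ℚ) : ℝ) := by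
          rw [rampB, if_neg (not_le.2 hft), if_pos]
          · simp only [htdef, pc_mk3]; push_cast; ring
          · refine ⟨by simp [htdef], by simp [htdef], ?_⟩
            simp only [htdef, pc_mk3]
            linarith
        rw [cF, hA, hB]
        have hq : qc t = qc f := by simp [htdef]
        rw [hq, ← hQdef]
        push_cast [hvdef]
        ring
      · exact absurd (by rw [hc3]; push_cast; ring) hne3
      · -- Case 4 : (Q+2)/3 < r
        set r' : ℚ := 3 * r - 2 with hr'def
        have h1 : Q < r' := by rw [hr'def]; linarith
        have h2 : r' < 1 := by rw [hr'def]; linarith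
        set q' : ℚ := r' / (1 - r') with hq'def
        have h3 : qlq q' = r' := qlq_surj (le_trans hQ0 h1.le) h2
        have h4 : qc f < q' := qlq_reflect_lt (by rw [h3, ← hQdef]; exact h1)
        set t : Idx κ := mk3 q' (kc f) 0 with htdef
        have hft : f < t := lt_of_qc_lt (by simpa [htdef] using h4)
        apply key t
        have hA : rampA f t = 1 := rampA_of_le hft.le
        have hB : rampB f t = 1 := by
          rw [rampB, if_neg (not_le.2 hft), if_neg]
          intro hcon
          exact absurd hcon.1 (by simpa [htdef] using ne_of_gt h4)
        rw [cF, hA, hB]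
        have : qc t = q' := by simp [htdef]
        rw [this, h3]
        push_cast [hr'def]
        ring

/-! ### The seminorm -/

section Seminorm

open MeasureTheory

variable {G : Type*} [AddCommGroup G]

noncomputable def pSum (c : Idx κ → ℝ) (s : ℝ) : (Idx κ →₀ G) →+ G :=
  Finsupp.liftAddHom (fun i => if c i ≤ s then AddMonoidHom.id G else 0)

lemma pSum_apply (c : Idx κ → ℝ) (s : ℝ) (x : Idx κ →₀ G) :
    pSum c s x = x.sum (fun i g => if c i ≤ s then g else 0) := by
  rw [pSum, Finsupp.liftAddHom_apply]
  apply Finsupp.sum_congr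
  intro i _
  split <;> simp

lemma pSum_single (c : Idx κ → ℝ) (s : ℝ) (i : Idx κ) (g : G) :
    pSum c s (Finsupp.single i g) = if c i ≤ s then g else 0 := by
  rw [pSum, Finsupp.liftAddHom_apply_single]
  split <;> simp

def NSet (c : Idx κ → ℝ) (x : Idx κ →₀ G) : Set ℝ :=
  {s | (0 ≤ s ∧ s < 1) ∧ pSum c s x ≠ 0}

noncomputable def NVal (c : Idx κ → ℝ) (x : Idx κ →₀ G) : ℝ :=
  (volume (NSet c x)).toReal

lemma NSet_subset_Ico (c : Idx κ → ℝ) (x : Idx κ →₀ G) : NSet c x ⊆ Set.Ico 0 1 :=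
  fun _ hs => ⟨hs.1.1, hs.1.2⟩

lemma volume_NSet_ne_top (c : Idx κ → ℝ) (x : Idx κ →₀ G) : volume (NSet c x) ≠ ⊤ := by
  have h1 : volume (NSet c x) ≤ volume (Set.Ico (0:ℝ) 1) := measure_mono (NSet_subset_Ico c x)
  rw [Real.volume_Ico] at h1
  exact ne_top_of_le_ne_top ENNReal.ofReal_ne_top h1

lemma NVal_nonneg (c : Idx κ → ℝ) (x : Idx κ →₀ G) : 0 ≤ NVal c x := ENNReal.toReal_nonneg

@[simp] lemma NVal_zero (c : Idx κ → ℝ) : NVal c (0 : Idx κ →₀ G) = 0 := by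
  have : NSet c (0 : Idx κ →₀ G) = ∅ := by
    ext s
    simp [NSet]
  rw [NVal, this]
  simp

lemma NSet_neg (c : Idx κ → ℝ) (x : Idx κ →₀ G) : NSet c (-x) = NSet c x := by
  ext s
  simp [NSet, map_neg, neg_ne_zero]

lemma NVal_neg (c : Idx κ → ℝ) (x : Idx κ →₀ G) : NVal c (-x) = NVal c x := by
  rw [NVal, NSet_neg, NVal]

lemma NSet_add_subset (c : Idx κ → ℝ) (x y : Idx κ →₀ G) :
    NSet c (x + y) ⊆ NSet c x ∪ NSet c y := by
  intro s hs
  obtain ⟨hI, hne⟩ := hs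
  by_cases hx : pSum c s x = 0
  · right
    refine ⟨hI, fun hy => hne ?_⟩
    rw [map_add, hx, hy, add_zero]
  · exact Or.inl ⟨hI, hx⟩

lemma NVal_add_le (c : Idx κ → ℝ) (x y : Idx κ →₀ G) :
    NVal c (x + y) ≤ NVal c x + NVal c y := by
  have h1 : volume (NSet c (x + y)) ≤ volume (NSet c x) + volume (NSet c y) :=
    le_trans (measure_mono (NSet_add_subset c x y)) (measure_union_le _ _)
  have h2 := ENNReal.toReal_mono
    (by
      exact ENNReal.add_ne_top.2 ⟨volume_NSet_ne_top c x, volume_NSet_ne_top c y⟩) h1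
  rwa [ENNReal.toReal_add (volume_NSet_ne_top c x) (volume_NSet_ne_top c y)] at h2

lemma NVal_sub_le (c : Idx κ → ℝ) (x y z : Idx κ →₀ G) :
    NVal c (x - z) ≤ NVal c (x - y) + NVal c (y - z) := by
  have h : x - z = (x - y) + (y - z) := by abel
  rw [h]
  exact NVal_add_le c _ _

lemma NVal_zsmul_le (c : Idx κ → ℝ) (n : ℤ) (x : Idx κ →₀ G) :
    NVal c (n • x) ≤ NVal c x := by
  have hsub : NSet c (n • x) ⊆ NSet c x := by
    intro s hs
    obtain ⟨hI, hne⟩ := hs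
    refine ⟨hI, fun hx => hne ?_⟩
    rw [map_zsmul, hx, smul_zero]
  have h1 := measure_mono (μ := volume) hsub
  exact ENNReal.toReal_mono (volume_NSet_ne_top c x) h1

lemma NVal_le_of_subset {c : Idx κ → ℝ} {x : Idx κ →₀ G} {u v : ℝ}
    (h : NSet c x ⊆ Set.Ico u v) (huv : u ≤ v) : NVal c x ≤ v - u := by
  have h1 : volume (NSet c x) ≤ ENNReal.ofReal (v - u) := by
    rw [← Real.volume_Ico]
    exact measure_mono h
  have h2 := ENNReal.toReal_mono ENNReal.ofReal_ne_top h1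
  rwa [ENNReal.toReal_ofReal (by linarith)] at h2

lemma NVal_pair_le (c : Idx κ → ℝ) (i j : Idx κ) (g : G) :
    NVal c (Finsupp.single i g - Finsupp.single j g) ≤ |c i - c j| := by
  have hsub : NSet c (Finsupp.single i g - Finsupp.single j g) ⊆
      Set.Ico (min (c i) (c j)) (max (c i) (c j)) := by
    intro s hs
    obtain ⟨-, hne⟩ := hs
    rw [map_sub, pSum_single, pSum_single] at hne
    by_cases h1 : c i ≤ s <;> by_cases h2 : c j ≤ s
    · simp [h1, h2] at hne
    · exact ⟨le_trans (min_le_left _ _) h1, lt_of_lt_of_le (not_le.1 h2) (le_max_right _ _)⟩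
    · exact ⟨le_trans (min_le_right _ _) h2, lt_of_lt_of_le (not_le.1 h1) (le_max_left _ _)⟩
    · simp [h1, h2] at hne
  have h := NVal_le_of_subset hsub (min_le_max)
  calc NVal c (Finsupp.single i g - Finsupp.single j g) ≤ max (c i) (c j) - min (c i) (c j) := h
    _ = |c j - c i| := max_sub_min_eq_abs _ _
    _ = |c i - c j| := abs_sub_comm _ _

lemma NVal_single_le (c : Idx κ → ℝ) (j : Idx κ) (g : G) (hj : c j ≤ 1) :
    NVal c (Finsupp.single j g) ≤ 1 - c j := by
  have hsub : NSet c (Finsupp.single j g) ⊆ Set.Ico (c j) 1 := by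
    intro s hs
    obtain ⟨⟨_, hs1⟩, hne⟩ := hs
    rw [pSum_single] at hne
    by_cases h1 : c j ≤ s
    · exact ⟨h1, hs1⟩
    · simp [h1] at hne
  exact NVal_le_of_subset hsub hj

lemma NVal_pos {c : Idx κ → ℝ} (hc1 : ∀ t, c t < 1) (hc0 : ∀ t, 0 ≤ c t)
    {x : Idx κ →₀ G} {f : Idx κ} (hf : f ∈ x.support)
    (hsep : ∀ t ∈ x.support, t ≠ f → c f < c t) : 0 < NVal c x := by
  classical
  set T := (x.support.erase f).image c with hT
  set β : ℝ := if hTne : T.Nonempty then min (T.min' hTne) 1 else 1 with hβ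
  have hβle1 : β ≤ 1 := by
    rw [hβ]
    split
    · exact min_le_right _ _
    · norm_num
  have hcfβ : c f < β := by
    rw [hβ]
    split
    next hTne =>
      rw [lt_min_iff]
      refine ⟨?_, hc1 f⟩
      rw [Finset.lt_min'_iff]
      intro y hy
      rw [hT] at hy
      obtain ⟨t, ht, rfl⟩ := Finset.mem_image.1 hy
      exact hsep t (Finset.mem_of_mem_erase ht) (Finset.ne_of_mem_erase ht)
    · exact hc1 f
  have hsub : Set.Ico (c f) β ⊆ NSet c x := by
    intro s hs
    refine ⟨⟨le_trans (hc0 f) hs.1, lt_of_lt_of_le hs.2 hβle1⟩, ?_⟩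
    rw [pSum_apply]
    have heval : x.sum (fun i g => if c i ≤ s then g else 0)
        = ∑ i ∈ x.support, (if c i ≤ s then x i else 0) := rfl
    rw [heval, Finset.sum_eq_single f]
    · rw [if_pos hs.1]
      exact Finsupp.mem_support_iff.1 hf
    · intro t ht htf
      rw [if_neg]
      intro hcon
      have : β ≤ c t := by
        rw [hβ]
        split
        next hTne =>
          refine le_trans (min_le_left _ _) (Finset.min'_le _ _ ?_)
          rw [hT]
          exact Finset.mem_image.2 ⟨t, Finset.mem_erase.2 ⟨htf, ht⟩, rfl⟩
        next hTne =>
          exact absurd ⟨c t, Finset.mem_image.2 ⟨t, Finset.mem_erase.2 ⟨htf, ht⟩, rfl⟩⟩ hTne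
      exact absurd (lt_of_le_of_lt (le_trans this hcon) hs.2) (lt_irrefl _)
    · intro hcon
      exact absurd hf hcon
  have h1 : ENNReal.ofReal (β - c f) ≤ volume (NSet c x) := by
    rw [← Real.volume_Ico]
    exact measure_mono hsub
  have h2 := ENNReal.toReal_mono (volume_NSet_ne_top c x) h1
  rw [ENNReal.toReal_ofReal (by linarith)] at h2
  rw [NVal]
  linarith

end Seminorm

/-! ### The family of seminorms and the topology -/

section Topology

open MeasureTheory

variable (κ : Type*) [LinearOrder κ] (G : Type*) [AddCommGroup G]

def Psi : Type _ := {c : Idx κ → ℝ // Monotone c ∧ (∀ t, 0 ≤ c t ∧ c t < 1) ∧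
  ∀ a b : ℝ, 0 ≤ a → a < b → b ≤ 1 → ∃ t, a < c t ∧ c t < b}

variable {κ}

noncomputable def cFPsi (f : Idx κ) : Psi κ :=
  ⟨cF f, cF_mono f, fun t => ⟨cF_nonneg f t, cF_lt_one f t⟩,
    fun _ _ ha hab hb => cF_dense f ha hab hb⟩

variable {G}

noncomputable def pm (c : Psi κ) : PseudoMetricSpace (Idx κ →₀ G) where
  dist x y := NVal c.1 (x - y)
  dist_self x := by simp
  dist_comm x y := by
    show NVal c.1 (x - y) = NVal c.1 (y - x)
    have h : x - y = -(y - x) := by abel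
    rw [h, NVal_neg]
  dist_triangle x y z := NVal_sub_le c.1 x y z

lemma pm_dist (c : Psi κ) (x y : Idx κ →₀ G) :
    @dist _ (pm c).toDist x y = NVal c.1 (x - y) := rfl

noncomputable def tc (c : Psi κ) : TopologicalSpace (Idx κ →₀ G) :=
  (pm c).toUniformSpace.toTopologicalSpace

noncomputable def tD : TopologicalSpace (Idx κ →₀ G) := ⨅ c : Psi κ, tc c

lemma tag_tc (c : Psi κ) : @IsTopologicalAddGroup (Idx κ →₀ G) (tc c) _ := by
  letI := pm (G := G) c
  have hadd : Continuous (fun p : (Idx κ →₀ G) × (Idx κ →₀ G) => p.1 + p.2) := by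
    rw [Metric.continuous_iff]
    rintro ⟨a, b⟩ ε hε
    refine ⟨ε/2, by linarith, ?_⟩
    rintro ⟨x, y⟩ hxy
    rw [Prod.dist_eq] at hxy
    have h1 : NVal c.1 (x - a) < ε/2 := lt_of_le_of_lt (le_max_left _ _) hxy
    have h2 : NVal c.1 (y - b) < ε/2 := lt_of_le_of_lt (le_max_right _ _) hxy
    show NVal c.1 (x + y - (a + b)) < ε
    have heq : x + y - (a + b) = (x - a) + (y - b) := by abel
    rw [heq]
    calc NVal c.1 ((x - a) + (y - b)) ≤ NVal c.1 (x - a) + NVal c.1 (y - b) :=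
          NVal_add_le _ _ _
      _ < ε := by linarith
  have hneg : Continuous (fun p : (Idx κ →₀ G) => -p) := by
    rw [Metric.continuous_iff]
    intro a ε hε
    refine ⟨ε, hε, fun x hx => ?_⟩
    show NVal c.1 (-x - -a) < ε
    have heq : -x - -a = -(x - a) := by abel
    rw [heq, NVal_neg]
    exact hx
  exact { continuous_add := hadd, continuous_neg := hneg }

lemma tag_tD : @IsTopologicalAddGroup (Idx κ →₀ G) (tD (G := G) (κ := κ)) _ :=
  topologicalAddGroup_iInf (fun c => tag_tc c)

lemma t2_tD : @T2Space (Idx κ →₀ G) (tD (G := G) (κ := κ)) := by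
  classical
  refine @T2Space.mk _ (tD (G := G) (κ := κ)) (fun x y hxy => ?_)
  have hsub : x - y ≠ 0 := sub_ne_zero.2 hxy
  have hsupp : (x - y).support.Nonempty := Finsupp.support_nonempty_iff.2 hsub
  set f := (x - y).support.min' hsupp with hfdef
  have hf : f ∈ (x - y).support := Finset.min'_mem _ _
  have hsep : ∀ t ∈ (x - y).support, t ≠ f → cF f f < cF f t := fun t ht htf =>
    cF_sep (lt_of_le_of_ne (Finset.min'_le _ _ ht) (Ne.symm htf))
  have hr : 0 < NVal (cF f) (x - y) :=
    NVal_pos (cF_lt_one f) (cF_nonneg f) hf hsep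
  set r := NVal (cF f) (x - y) with hrdef
  set c : Psi κ := cFPsi f with hcdef
  refine ⟨@Metric.ball _ (pm (G := G) c) x (r/2), @Metric.ball _ (pm (G := G) c) y (r/2),
    ?_, ?_, ?_, ?_, ?_⟩
  · exact (@Metric.isOpen_ball _ (pm (G := G) c) x (r/2)).mono (iInf_le _ c)
  · exact (@Metric.isOpen_ball _ (pm (G := G) c) y (r/2)).mono (iInf_le _ c)
  · exact @Metric.mem_ball_self _ (pm (G := G) c) x (r/2) (by linarith)
  · exact @Metric.mem_ball_self _ (pm (G := G) c) y (r/2) (by linarith)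
  · rw [Set.disjoint_left]
    intro z hz1 hz2
    rw [@Metric.mem_ball _ (pm (G := G) c)] at hz1 hz2
    rw [pm_dist] at hz1 hz2
    have hle : NVal (cF f) (x - y) ≤ NVal (cF f) (x - z) + NVal (cF f) (z - y) :=
      NVal_sub_le _ _ _ _
    have h1 : NVal (cF f) (x - z) < r/2 := by
      have : x - z = -(z - x) := by abel
      rw [this, NVal_neg]
      exact hz1
    have h2 : NVal (cF f) (z - y) < r/2 := hz2
    rw [← hrdef] at hle
    linarith

/-! ### Chain connectivity -/

lemma chain_exists (cs : Finset (Psi κ)) {ε : ℝ} (hε : 0 < ε) (u v : Idx κ) :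
    Relation.ReflTransGen (fun a b : Idx κ => ∀ c ∈ cs, |c.1 a - c.1 b| < ε) u v := by
  classical
  set R := fun a b : Idx κ => ∀ c ∈ cs, |c.1 a - c.1 b| < ε with hR
  have hsymm : Symmetric R := by
    intro a b hab c hc
    rw [abs_sub_comm]
    exact hab c hc
  have main : ∀ n : ℕ, ∀ u v : Idx κ, u ≤ v →
      (∑ c ∈ cs, (c.1 v - c.1 u)) < n * (ε/3) → Relation.ReflTransGen R u v := by
    intro n
    induction n with
    | zero =>
        intro u v huv hsum
        exfalso
        have h0 : (0:ℝ) ≤ ∑ c ∈ cs, (c.1 v - c.1 u) :=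
          Finset.sum_nonneg (fun c _ => sub_nonneg.2 (c.2.1 huv))
        simp only [Nat.cast_zero, zero_mul] at hsum
        linarith
    | succ n ih =>
        intro u v huv hsum
        by_cases hall : ∀ c ∈ cs, c.1 v - c.1 u < ε
        · apply Relation.ReflTransGen.single
          intro c hc
          rw [abs_sub_comm, abs_of_nonneg (sub_nonneg.2 (c.2.1 huv))]
          exact hall c hc
        · push_neg at hall
          obtain ⟨c₀, hc₀, hge⟩ := hall
          have hu0 : 0 ≤ c₀.1 u := (c₀.2.2.1 u).1
          have hv1 : c₀.1 v < 1 := (c₀.2.2.1 v).2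
          obtain ⟨w, hw1, hw2⟩ := c₀.2.2.2 (c₀.1 u + ε/3) (c₀.1 u + 2*(ε/3))
            (by linarith) (by linarith) (by linarith)
          have huw : u < w := by
            by_contra hc
            have := c₀.2.1 (not_lt.1 hc)
            linarith
          have hwv : w < v := by
            by_contra hc
            have := c₀.2.1 (not_lt.1 hc)
            linarith
          have hterm_nonneg_uw : ∀ c ∈ cs, (0:ℝ) ≤ c.1 w - c.1 u :=
            fun c _ => sub_nonneg.2 (c.2.1 huw.le)
          have hterm_nonneg_wv : ∀ c ∈ cs, (0:ℝ) ≤ c.1 v - c.1 w :=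
            fun c _ => sub_nonneg.2 (c.2.1 hwv.le)
          have hsplit : (∑ c ∈ cs, (c.1 v - c.1 u))
              = (∑ c ∈ cs, (c.1 w - c.1 u)) + (∑ c ∈ cs, (c.1 v - c.1 w)) := by
            rw [← Finset.sum_add_distrib]
            apply Finset.sum_congr rfl
            intro c _
            ring
          have hlow1 : ε/3 < ∑ c ∈ cs, (c.1 w - c.1 u) :=
            lt_of_lt_of_le (by linarith) (Finset.single_le_sum hterm_nonneg_uw hc₀)
          have hlow2 : ε/3 < ∑ c ∈ cs, (c.1 v - c.1 w) :=
            lt_of_lt_of_le (by linarith) (Finset.single_le_sum hterm_nonneg_wv hc₀)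
          have hn : (n:ℝ) * (ε/3) = ((n+1 : ℕ) : ℝ) * (ε/3) - ε/3 := by
            push_cast
            ring
          exact Relation.ReflTransGen.trans
            (ih u w huw.le (by rw [hn]; linarith))
            (ih w v hwv.le (by rw [hn]; linarith))
  rcases le_total u v with h | h
  · obtain ⟨n, hn⟩ := exists_nat_gt ((∑ c ∈ cs, (c.1 v - c.1 u)) / (ε/3))
    exact main n u v h (by rwa [div_lt_iff₀ (by linarith)] at hn)
  · obtain ⟨n, hn⟩ := exists_nat_gt ((∑ c ∈ cs, (c.1 u - c.1 v)) / (ε/3))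
    exact (@Relation.ReflTransGen.stdSymm _ _ ⟨fun a b h => hsymm h⟩).symm _ _
      (main n v u h (by rwa [div_lt_iff₀ (by linarith)] at hn))

/-! ### Corner points -/

lemma corner_exists [Nonempty κ] (cs : Finset (Psi κ)) {δ : ℝ} (hδ : 0 < δ) :
    ∃ j : Idx κ, ∀ c ∈ cs, 1 - δ < c.1 j := by
  classical
  induction cs using Finset.induction_on with
  | empty => exact ⟨mk3 0 (Classical.arbitrary κ) 0, by simp⟩
  | @insert c₀ s hc ih =>
      obtain ⟨j, hj⟩ := ih
      obtain ⟨t, ht1, ht2⟩ := c₀.2.2.2 (max (1 - δ) 0) 1 (le_max_right _ _)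
        (by rw [max_lt_iff]; exact ⟨by linarith, by linarith⟩) le_rfl
      refine ⟨max j t, ?_⟩
      intro c hc'
      rcases Finset.mem_insert.1 hc' with rfl | hcs
      · have hm := c.2.1 (le_max_right j t)
        have h' : (1 - δ : ℝ) ≤ max (1 - δ) 0 := le_max_left _ _
        linarith
      · exact lt_of_lt_of_le (hj c hcs) (c.2.1 (le_max_left j t))

end Topology

/-! ### SSGP property -/


section SSGP

variable {κ : Type*} [LinearOrder κ] [Nonempty κ] {G : Type*} [AddCommGroup G]

lemma nhds_tD (x : Idx κ →₀ G) :
    @nhds (Idx κ →₀ G) (tD (G := G) (κ := κ)) x = ⨅ c : Psi κ, @nhds _ (tc c) x :=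
  nhds_iInf

lemma ssgp_tD : @AddHasSSGP (Idx κ →₀ G) _ (tD (G := G) (κ := κ)) := by
  classical
  intro U hU
  rw [nhds_tD] at hU
  obtain ⟨J, hJfin, V, hV, hUeq⟩ := Filter.mem_iInf.1 hU
  haveI : Finite J := hJfin
  have hball : ∀ i : J, ∃ ε > 0, ∀ z : Idx κ →₀ G, NVal (i : Psi κ).1 z < ε → z ∈ V i := by
    intro i
    have hVi := hV i
    letI := pm (G := G) (i : Psi κ)
    replace hVi := Metric.mem_nhds_iff.1 hVi
    obtain ⟨ε, hε, hb⟩ := hVi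
    exact ⟨ε, hε, fun z hz => hb (by
      rw [Metric.mem_ball, pm_dist, sub_zero]
      exact hz)⟩
  choose εf hεf hεball using hball
  have hex : ∃ ε > 0, ∀ i : J, ε ≤ εf i := by
    by_cases h : Nonempty J
    · obtain ⟨i₀, hmin⟩ := Finite.exists_min εf
      exact ⟨εf i₀, hεf i₀, hmin⟩
    · exact ⟨1, one_pos, fun i => absurd ⟨i⟩ h⟩
  obtain ⟨ε, hε, hεle⟩ := hex
  set 𝓗 : Set (AddSubgroup (Idx κ →₀ G)) :=
    {H | ∃ i j : Idx κ, (∀ cJ : J, |(cJ : Psi κ).1 i - (cJ : Psi κ).1 j| < ε) ∧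
      ∃ g : G, H = AddSubgroup.zmultiples (Finsupp.single i g - Finsupp.single j g)} with h𝓗
  have hsmall : ∀ H ∈ 𝓗, (H : Set (Idx κ →₀ G)) ⊆ U := by
    rintro H ⟨i, j, hij, g, rfl⟩ z hz
    obtain ⟨n, hn⟩ := AddSubgroup.mem_zmultiples_iff.1 hz
    rw [hUeq]
    apply Set.mem_iInter.2
    intro cJ
    apply hεball cJ
    calc NVal (cJ : Psi κ).1 z = NVal (cJ : Psi κ).1 (n • (Finsupp.single i g - Finsupp.single j g)) := by
          rw [hn]
      _ ≤ NVal (cJ : Psi κ).1 (Finsupp.single i g - Finsupp.single j g) := NVal_zsmul_le _ _ _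
      _ ≤ |(cJ : Psi κ).1 i - (cJ : Psi κ).1 j| := NVal_pair_le _ _ _ _
      _ < ε := hij cJ
      _ ≤ εf cJ := hεle cJ
  refine ⟨𝓗, hsmall, ?_⟩
  set S := AddSubgroup.closure (⋃ H ∈ 𝓗, (H : Set (Idx κ →₀ G))) with hS
  have hpair : ∀ (g : G) (i j : Idx κ), Finsupp.single i g - Finsupp.single j g ∈ S := by
    intro g i j
    have hch := chain_exists hJfin.toFinset hε i j
    induction hch with
    | refl => simp only [sub_self]; exact AddSubgroup.zero_mem _
    | tail hrest hstep ih =>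
        rename_i b cc
        have hbc : Finsupp.single b g - Finsupp.single cc g ∈ S := by
          apply AddSubgroup.subset_closure
          apply Set.mem_biUnion (show AddSubgroup.zmultiples
              (Finsupp.single b g - Finsupp.single cc g) ∈ 𝓗 from ?_)
          · exact AddSubgroup.mem_zmultiples _
          · refine ⟨b, cc, fun cJ => ?_, g, rfl⟩
            exact hstep _ (hJfin.mem_toFinset.2 cJ.2)
        have heq : Finsupp.single i g - Finsupp.single cc g
            = (Finsupp.single i g - Finsupp.single b g)
              + (Finsupp.single b g - Finsupp.single cc g) := by abel
        rw [heq]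
        exact AddSubgroup.add_mem _ ih hbc
  have hsum : ∀ (x : Idx κ →₀ G) (j : Idx κ),
      x - Finsupp.single j (x.sum fun _ g => g) ∈ S := by
    intro x
    induction x using Finsupp.induction with
    | zero =>
        intro j
        rw [Finsupp.sum_zero_index, Finsupp.single_zero, sub_zero]
        exact AddSubgroup.zero_mem _
    | single_add a b f haf hb ih =>
        intro j
        have hsum1 : ((Finsupp.single a b + f).sum fun _ g => g)
            = b + (f.sum fun _ g => g) := by
          rw [Finsupp.sum_add_index' (fun _ => rfl) (fun _ _ _ => rfl),
            Finsupp.sum_single_index rfl]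
        rw [hsum1]
        have heq : (Finsupp.single a b + f) - Finsupp.single j (b + (f.sum fun _ g => g))
            = (Finsupp.single a b - Finsupp.single j b)
              + (f - Finsupp.single j (f.sum fun _ g => g)) := by
          rw [Finsupp.single_add]
          abel
        rw [heq]
        exact AddSubgroup.add_mem _ (hpair b a j) (ih j)
  intro x
  rw [@mem_closure_iff_nhds _ (tD (G := G) (κ := κ))]
  intro W hW
  rw [nhds_tD] at hW
  obtain ⟨J', hJ'fin, V', hV', hWeq⟩ := Filter.mem_iInf.1 hW
  haveI : Finite J' := hJ'fin
  have hball' : ∀ i : J', ∃ δ > 0, ∀ z : Idx κ →₀ G, NVal (i : Psi κ).1 (z - x) < δ → z ∈ V' i := by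
    intro i
    have hVi := hV' i
    letI := pm (G := G) (i : Psi κ)
    replace hVi := Metric.mem_nhds_iff.1 hVi
    obtain ⟨δ, hδ, hb⟩ := hVi
    exact ⟨δ, hδ, fun z hz => hb (by
      rw [Metric.mem_ball, pm_dist]
      exact hz)⟩
  choose δf hδf hδball using hball'
  have hex' : ∃ δ > 0, ∀ i : J', δ ≤ δf i := by
    by_cases h : Nonempty J'
    · obtain ⟨i₀, hmin⟩ := Finite.exists_min δf
      exact ⟨δf i₀, hδf i₀, hmin⟩
    · exact ⟨1, one_pos, fun i => absurd ⟨i⟩ h⟩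
  obtain ⟨δ, hδ, hδle⟩ := hex'
  obtain ⟨jc, hjc⟩ := corner_exists (κ := κ) hJ'fin.toFinset hδ
  set y := x - Finsupp.single jc (x.sum fun _ g => g) with hy
  refine ⟨y, ?_, hsum x jc⟩
  rw [hWeq]
  apply Set.mem_iInter.2
  intro i
  apply hδball i
  have heq : y - x = -(Finsupp.single jc (x.sum fun _ g => g)) := by
    rw [hy]
    abel
  rw [heq, NVal_neg]
  have hc1 : (i : Psi κ).1 jc ≤ 1 := ((i : Psi κ).2.2.1 jc).2.le
  calc NVal (i : Psi κ).1 (Finsupp.single jc (x.sum fun _ g => g))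
      ≤ 1 - (i : Psi κ).1 jc := NVal_single_le _ _ _ hc1
    _ < δ := by
        have := hjc (i : Psi κ) (hJ'fin.mem_toFinset.2 i.2)
        linarith
    _ ≤ δf i := hδle i

end SSGP

/-! ### Transporting along an equivalence of index types -/

noncomputable def natProdEquiv (I : Type*) [Infinite I] : (ℕ × I) ≃ I := by
  have hI : Cardinal.aleph0 ≤ Cardinal.mk I := Cardinal.infinite_iff.1 inferInstance
  have h1 : Cardinal.mk (ℕ × I) = Cardinal.mk I := by
    rw [Cardinal.mk_prod, Cardinal.mk_nat, Cardinal.lift_aleph0, Cardinal.lift_uzero]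
    exact Cardinal.mul_eq_right hI hI Cardinal.aleph0_ne_zero
  exact Classical.choice (Cardinal.eq.1 h1)

noncomputable def idxEquiv (I : Type*) [Infinite I] : Idx I ≃ I :=
  (ofLex.trans (Equiv.prodCongr (Equiv.refl ℚ) ofLex)).trans <|
    ((Equiv.prodCongr (Equiv.refl ℚ) (Equiv.prodComm I ℚ)).trans <|
      ((Equiv.prodAssoc ℚ ℚ I).symm).trans <|
        (Equiv.prodCongr (Denumerable.eqv (ℚ × ℚ)) (Equiv.refl I)).trans (natProdEquiv I))

end SSGPAux

open SSGPAux in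
/-- For a nontrivial abelian group `G` and an infinite index set `I`, the
direct sum `⊕_{i ∈ I} G` (finitely supported functions from `I` to `G`) admits
an SSGP topology. -/
theorem exists_ssgp_topology_directSum (G : Type u) [AddCommGroup G] [Nontrivial G]
    (I : Type v) [Infinite I] :
    ∃ t : TopologicalSpace (I →₀ G),
      haveI := t
      ∃ tg : IsTopologicalAddGroup (I →₀ G),
        haveI := tg
        T2Space (I →₀ G) ∧ AddHasSSGP (I →₀ G) := by
  classical
  letI : LinearOrder I := IsWellOrder.linearOrder WellOrderingRel
  haveI : Nonempty I := inferInstance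
  let e : Idx I ≃ I := idxEquiv I
  let φ : (Idx I →₀ G) ≃+ (I →₀ G) := Finsupp.domCongr e
  letI t0 : TopologicalSpace (Idx I →₀ G) := tD (G := G) (κ := I)
  haveI htag0 : IsTopologicalAddGroup (Idx I →₀ G) := tag_tD
  haveI ht20 : T2Space (Idx I →₀ G) := t2_tD
  have hssgp0 : AddHasSSGP (Idx I →₀ G) := ssgp_tD
  letI tI : TopologicalSpace (I →₀ G) := TopologicalSpace.induced (⇑φ.symm) t0
  haveI htagI : IsTopologicalAddGroup (I →₀ G) :=
    topologicalAddGroup_induced (φ.symm.toAddMonoidHom)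
  have hind : Topology.IsInducing (⇑φ.symm) := ⟨rfl⟩
  let homeo : (I →₀ G) ≃ₜ (Idx I →₀ G) :=
    Equiv.toHomeomorphOfIsInducing φ.symm.toEquiv hind
  haveI ht2I : T2Space (I →₀ G) := homeo.symm.t2Space
  refine ⟨tI, htagI, ht2I, ?_⟩
  -- now the SSGP property
  intro U hU
  have h0 : homeo (0 : I →₀ G) = 0 := map_zero φ.symm
  have hU2 : (⇑homeo) '' U ∈ nhds (0 : Idx I →₀ G) := by
    rw [← h0, ← homeo.map_nhds_eq 0]
    exact Filter.image_mem_map hU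
  obtain ⟨𝓗', hsmall', hdense'⟩ := hssgp0 _ hU2
  refine ⟨(AddSubgroup.map (φ.toAddMonoidHom)) '' 𝓗', ?_, ?_⟩
  · rintro H ⟨H', hH', rfl⟩ z hz
    obtain ⟨w, hw, rfl⟩ := AddSubgroup.mem_map.1 hz
    have hw2 : w ∈ (⇑homeo) '' U := hsmall' H' hH' hw
    obtain ⟨u, hu, rfl⟩ := hw2
    have : φ.toAddMonoidHom (homeo u) = u := by
      show φ (φ.symm u) = u
      exact φ.apply_symm_apply u
    rwa [this]
  · have hEq : (⋃ H ∈ (AddSubgroup.map (φ.toAddMonoidHom)) '' 𝓗', (H : Set (I →₀ G)))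
        = ⇑φ.toAddMonoidHom '' (⋃ H' ∈ 𝓗', (H' : Set (Idx I →₀ G))) := by
      ext z
      simp only [Set.mem_iUnion, Set.mem_image, SetLike.mem_coe]
      constructor
      · rintro ⟨H, ⟨⟨H', hH', rfl⟩, hz⟩⟩
        obtain ⟨w, hw, rfl⟩ := AddSubgroup.mem_map.1 hz
        exact ⟨w, ⟨H', hH', hw⟩, rfl⟩
      · rintro ⟨w, ⟨H', hH', hw⟩, rfl⟩
        exact ⟨AddSubgroup.map φ.toAddMonoidHom H', ⟨⟨H', hH', rfl⟩,
          AddSubgroup.mem_map.2 ⟨w, hw, rfl⟩⟩⟩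
    rw [hEq, ← AddMonoidHom.map_closure]
    rw [AddSubgroup.coe_map]
    intro z
    have hz' := hdense' (homeo z)
    have hz2 : z = φ.toAddMonoidHom (homeo z) := (φ.apply_symm_apply z).symm
    have hsub := image_closure_subset_closure_image
      (s := ((AddSubgroup.closure (⋃ H' ∈ 𝓗', (H' : Set (Idx I →₀ G)))) : Set (Idx I →₀ G)))
      (f := ⇑φ.toAddMonoidHom) homeo.symm.continuous
    rw [hz2]
    exact hsub ⟨homeo z, hz', rfl⟩
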